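/- Fix ε > 0 and ε₀ > 0, and consider the ODE T′ = T·(ε·T − ε₀²)/(ε·ε₀² − T³) governing the spine of a left herringbone for cubic boundary data. Then: (a) the constant functions T ≡ 0 and T ≡ ε₀²/ε are solutions; (b) if T : I → ℝ is a differentiable function on an interval I with T(u) ∉ {0, ε₀²/ε} and ε·ε₀² − T(u)³ ≠ 0 for all u ∈ I, and if there is a constant c such that u = −T(u)²/(2ε) − (ε₀²/ε²)·T(u) − ε·log|T(u)| + ((ε⁴ − ε₀⁴)/ε³)·log|T(u) − ε₀²/ε| + c for all u ∈ I, then T satisfies T′(u) = T(u)·(ε·T(u) − ε₀²)/(ε·ε₀² − T(u)³) on I. -/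

import Mathlib

open Set

noncomputable section

/-- The spine ODE `T' = T(εT - ε₀²)/(εε₀² - T³)` for cubic boundary data: the constants `0`
and `ε₀²/ε` are solutions, and any function satisfying the implicit relation (7.6) of the
paper solves the ODE. -/
theorem cubic_spine_ode_solutions (ε ε₀ : ℝ) (hε : 0 < ε) (hε₀ : 0 < ε₀) :
    (∀ u : ℝ, deriv (fun _ : ℝ => (0 : ℝ)) u =
      (0 : ℝ) * (ε * 0 - ε₀ ^ 2) / (ε * ε₀ ^ 2 - 0 ^ 3)) ∧
    (∀ u : ℝ, deriv (fun _ : ℝ => ε₀ ^ 2 / ε) u =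
      (ε₀ ^ 2 / ε) * (ε * (ε₀ ^ 2 / ε) - ε₀ ^ 2) / (ε * ε₀ ^ 2 - (ε₀ ^ 2 / ε) ^ 3)) ∧
    (∀ (a b : ℝ) (T : ℝ → ℝ) (c : ℝ),
      (∀ u ∈ Set.Ioo a b, DifferentiableAt ℝ T u) →
      (∀ u ∈ Set.Ioo a b, T u ≠ 0 ∧ T u ≠ ε₀ ^ 2 / ε ∧ ε * ε₀ ^ 2 - (T u) ^ 3 ≠ 0) →
      (∀ u ∈ Set.Ioo a b,
        u = -(T u) ^ 2 / (2 * ε) - (ε₀ ^ 2 / ε ^ 2) * T u - ε * Real.log |T u| +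
          ((ε ^ 4 - ε₀ ^ 4) / ε ^ 3) * Real.log |T u - ε₀ ^ 2 / ε| + c) →
      ∀ u ∈ Set.Ioo a b,
        deriv T u = T u * (ε * T u - ε₀ ^ 2) / (ε * ε₀ ^ 2 - (T u) ^ 3)) := by
  have hεne : ε ≠ 0 := ne_of_gt hε
  refine ⟨fun u => by simp, fun u => by
    have : ε * (ε₀ ^ 2 / ε) - ε₀ ^ 2 = 0 := by field_simp; ring
    simp [this], ?_⟩
  intro a b T c hdiff hne hrel u hu
  obtain ⟨hT0, hTk, hM⟩ := hne u hu
  set x := T u with hx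
  set t' := deriv T u with ht'
  have hT : HasDerivAt T t' u := (hdiff u hu).hasDerivAt
  have hxk : x - ε₀ ^ 2 / ε ≠ 0 := sub_ne_zero.mpr hTk
  -- the implicit function F
  set D : ℝ := -x / ε - ε₀ ^ 2 / ε ^ 2 - ε / x + (ε ^ 4 - ε₀ ^ 4) / ε ^ 3 / (x - ε₀ ^ 2 / ε)
    with hD
  have hF : HasDerivAt (fun y : ℝ => -y ^ 2 / (2 * ε) - (ε₀ ^ 2 / ε ^ 2) * y -
      ε * Real.log y + ((ε ^ 4 - ε₀ ^ 4) / ε ^ 3) * Real.log (y - ε₀ ^ 2 / ε) + c) D x := by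
    have h1 : HasDerivAt (fun y : ℝ => -y ^ 2 / (2 * ε)) (-(2 * x) / (2 * ε)) x := by
      have := ((hasDerivAt_pow 2 x).neg).div_const (2 * ε)
      simpa using this
    have h2 : HasDerivAt (fun y : ℝ => (ε₀ ^ 2 / ε ^ 2) * y) (ε₀ ^ 2 / ε ^ 2) x := by
      simpa using (hasDerivAt_id x).const_mul (ε₀ ^ 2 / ε ^ 2)
    have h3 : HasDerivAt (fun y : ℝ => ε * Real.log y) (ε * x⁻¹) x :=
      (Real.hasDerivAt_log hT0).const_mul ε
    have h4 : HasDerivAt (fun y : ℝ => Real.log (y - ε₀ ^ 2 / ε)) ((x - ε₀ ^ 2 / ε)⁻¹) x := by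
      have := (Real.hasDerivAt_log hxk).comp x ((hasDerivAt_id x).sub_const (ε₀ ^ 2 / ε))
      simp only [mul_one] at this; exact this
    have h5 := (((h1.sub h2).sub h3).add (h4.const_mul ((ε ^ 4 - ε₀ ^ 4) / ε ^ 3))).add_const c
    refine h5.congr_deriv ?_
    rw [hD]
    field_simp
  -- compose with T
  have hcomp : HasDerivAt (fun v : ℝ => -(T v) ^ 2 / (2 * ε) - (ε₀ ^ 2 / ε ^ 2) * T v -
      ε * Real.log (T v) + ((ε ^ 4 - ε₀ ^ 4) / ε ^ 3) * Real.log (T v - ε₀ ^ 2 / ε) + c)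
      (D * t') u := hF.comp u hT
  -- the composed function equals the identity near u
  have heq : (fun v : ℝ => -(T v) ^ 2 / (2 * ε) - (ε₀ ^ 2 / ε ^ 2) * T v -
      ε * Real.log (T v) + ((ε ^ 4 - ε₀ ^ 4) / ε ^ 3) * Real.log (T v - ε₀ ^ 2 / ε) + c)
      =ᶠ[nhds u] fun v => v := by
    filter_upwards [Ioo_mem_nhds hu.1 hu.2] with v hv
    rw [← Real.log_abs (T v), ← Real.log_abs (T v - ε₀ ^ 2 / ε)]
    exact (hrel v hv).symm
  have hid : HasDerivAt (fun v : ℝ => v) (D * t') u := hcomp.congr_of_eventuallyEq heq.symm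
  have hone : D * t' = 1 := by
    have := hid.deriv
    simpa using this.symm
  -- now solve for t'
  have hN : x * (ε * x - ε₀ ^ 2) ≠ 0 := by
    refine mul_ne_zero hT0 ?_
    intro h
    apply hTk
    field_simp
    linarith [sub_eq_zero.mp h]
  have hεx : x * ε - ε₀ ^ 2 ≠ 0 := by
    intro h; apply hTk; field_simp; linarith
  have hεx' : ε * x - ε₀ ^ 2 ≠ 0 := by rw [mul_comm]; exact hεx
  have hDN : D * (x * (ε * x - ε₀ ^ 2)) = ε * ε₀ ^ 2 - x ^ 3 := by
    rw [hD]
    field_simp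
    ring
  have hDne : D ≠ 0 := by
    intro h; rw [h, zero_mul] at hone; exact zero_ne_one hone
  have ht'val : t' = D⁻¹ := by
    field_simp at hone ⊢
    linarith [hone]
  rw [ht'val, ← hDN, mul_comm D, ← div_div, div_self hN, one_div]
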